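/- Let μ be a positive locally finite Borel measure on ℝⁿ that is doubling. Then for every κ ∈ ℕ there exists a positive constant C_κ, depending only on n, κ and the doubling constant of μ, such that |Q|_μ ≤ C_κ ∫_Q |P(x)|² dμ(x) for all cubes Q in ℝⁿ and all Q-normalized polynomials P of degree less than κ. -/

import Mathlib

open MeasureTheory Set Function
open scoped ENNReal NNReal

noncomputable section

/-- `ℝⁿ` with the Euclidean metric. -/
abbrev Rn (n : ℕ) : Type := EuclideanSpace ℝ (Fin n)

/-- The closed axes-parallel cube with center `c` and side length `l`. -/
def Cube {n : ℕ} (c : Rn n) (l : ℝ) : Set (Rn n) :=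
  {x | ∀ i, |x i - c i| ≤ l / 2}

/-- `μ` is doubling with doubling constant `D`: `|2Q|_μ ≤ D |Q|_μ` for all cubes `Q`. -/
def DoublingWith {n : ℕ} (μ : Measure (Rn n)) (D : ℝ) : Prop :=
  ∀ (c : Rn n) (l : ℝ), 0 < l → μ (Cube c (2 * l)) ≤ ENNReal.ofReal D * μ (Cube c l)

/-- `μ` has doubling exponent `θ`: `|2^{-k}Q|_μ ≥ 2^{-θ k}|Q|_μ` for all cubes `Q`, `k ∈ ℕ`. -/
def HasDoublingExp {n : ℕ} (μ : Measure (Rn n)) (θ : ℝ) : Prop :=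
  ∀ (c : Rn n) (l : ℝ) (k : ℕ), 0 < l →
    ENNReal.ofReal ((2 : ℝ) ^ (-(θ * (k : ℝ)))) * μ (Cube c l) ≤
      μ (Cube c ((2 : ℝ) ^ (-(k : ℝ)) * l))

/-- Coifman–Fefferman comparability with parameters `ε, η`:
for all cubes `Q` and compact `E ⊆ Q`, `|E|_ω/|Q|_ω < ε` implies `|E|_σ/|Q|_σ < η`. -/
def CFComparable {n : ℕ} (σ ω : Measure (Rn n)) (ε η : ℝ) : Prop :=
  ∀ (c : Rn n) (l : ℝ), 0 < l → ∀ E : Set (Rn n), IsCompact E → E ⊆ Cube c l →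
    ω E < ENNReal.ofReal ε * ω (Cube c l) → σ E < ENNReal.ofReal η * σ (Cube c l)

namespace Statement12Aux

open MvPolynomial

variable {n : ℕ}

lemma continuous_coord (i : Fin n) : Continuous fun x : Rn n => x i :=
  (EuclideanSpace.proj (𝕜 := ℝ) i).continuous

lemma cube_isClosed (c : Rn n) (l : ℝ) : IsClosed (Cube c l) := by
  have h : Cube c l = ⋂ i, {x : Rn n | |x i - c i| ≤ l / 2} := by
    ext x; simp [Cube, Set.mem_iInter]
  rw [h]
  exact isClosed_iInter fun i =>
    isClosed_le (((continuous_coord i).sub continuous_const).abs) continuous_const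

lemma dist_le_of_forall {x y : Rn n} {a : ℝ} (ha : 0 ≤ a) (h : ∀ i, |x i - y i| ≤ a) :
    dist x y ≤ (n + 1) * a := by
  rw [EuclideanSpace.dist_eq]
  have h1 : ∑ i, dist (x i) (y i) ^ 2 ≤ n * a ^ 2 := by
    calc ∑ i, dist (x i) (y i) ^ 2 ≤ ∑ _i : Fin n, a ^ 2 := by
          refine Finset.sum_le_sum fun i _ => ?_
          rw [Real.dist_eq]
          exact pow_le_pow_left₀ (abs_nonneg _) (h i) 2
      _ = n * a ^ 2 := by simp [Finset.sum_const, mul_comm]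
  have h2 : (n : ℝ) * a ^ 2 ≤ ((n + 1) * a) ^ 2 := by nlinarith [sq_nonneg a, Nat.cast_nonneg (α := ℝ) n]
  calc Real.sqrt (∑ i, dist (x i) (y i) ^ 2) ≤ Real.sqrt (((n + 1) * a) ^ 2) :=
        Real.sqrt_le_sqrt (h1.trans h2)
    _ = (n + 1) * a := Real.sqrt_sq (by positivity)

lemma cube_isCompact (c : Rn n) (l : ℝ) : IsCompact (Cube c l) := by
  refine Metric.isCompact_of_isClosed_isBounded (cube_isClosed c l) ?_
  refine Metric.isBounded_closedBall (x := c) (r := (n + 1) * (|l| / 2)) |>.subset ?_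
  intro x hx
  rw [Metric.mem_closedBall]
  exact dist_le_of_forall (by positivity) fun i =>
    (hx i).trans (by cases abs_cases l with
      | inl h => rw [h.1] | inr h => nlinarith [h.1, abs_nonneg l])

lemma cube_self_mem {c : Rn n} {l : ℝ} (hl : 0 ≤ l) : c ∈ Cube c l := fun i => by
  simp [hl]; positivity

lemma continuous_evalRn (p : MvPolynomial (Fin n) ℝ) :
    Continuous fun x : Rn n => eval (fun i => x i) p :=
  (MvPolynomial.continuous_eval p).comp (continuous_pi fun i => continuous_coord i)

lemma eval_shift (c : Rn n) (l : ℝ) (p : MvPolynomial (Fin n) ℝ) (x : Fin n → ℝ) :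
    eval x (eval₂ C (fun i => C (c i) + C l * X i) p) = eval (fun i => c i + l * x i) p := by
  rw [eval₂_comp_left (MvPolynomial.eval x) C (fun i => C (c i) + C l * X i) p]
  have h1 : (MvPolynomial.eval x).comp (C : ℝ →+* MvPolynomial (Fin n) ℝ) = RingHom.id ℝ :=
    RingHom.ext fun r => by simp
  have h2 : ⇑(MvPolynomial.eval x) ∘ (fun i => C (c i) + C l * X i) = fun i => c i + l * x i := by
    funext i; simp
  rw [h1, h2, eval₂_id]

lemma eq_zero_of_eval_zero_on_unit_cube (p : MvPolynomial (Fin n) ℝ)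
    (h : ∀ x : Rn n, x ∈ Cube 0 1 → eval (fun i => x i) p = 0) : p = 0 := by
  apply MvPolynomial.funext
  intro x
  set q : Polynomial ℝ := eval₂ Polynomial.C (fun i => Polynomial.C (x i) * Polynomial.X) p with hq
  have key : ∀ t : ℝ, Polynomial.eval t q = eval (fun i => x i * t) p := by
    intro t
    rw [hq, ← Polynomial.coe_evalRingHom,
      eval₂_comp_left (Polynomial.evalRingHom t) Polynomial.C
        (fun i => Polynomial.C (x i) * Polynomial.X) p]
    have h1 : (Polynomial.evalRingHom t).comp (Polynomial.C : ℝ →+* Polynomial ℝ) = RingHom.id ℝ :=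
      RingHom.ext fun r => by simp
    have h2 : (Polynomial.evalRingHom t) ∘ (fun i => Polynomial.C (x i) * Polynomial.X) =
        fun i => x i * t := by
      funext i; simp
    rw [h1, h2, eval₂_id]
  set ε : ℝ := (1 + ∑ i, |x i|)⁻¹ / 2 with hε
  have hsum : (0:ℝ) ≤ ∑ i, |x i| := Finset.sum_nonneg fun i _ => abs_nonneg _
  have hε0 : 0 < ε := by positivity
  have hroots : Set.Icc 0 ε ⊆ {t | Polynomial.IsRoot q t} := by
    intro t ht
    have hxt : ∀ i, |x i * t| ≤ 1 / 2 := by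
      intro i
      rw [abs_mul]
      have h1 : |x i| ≤ ∑ j, |x j| := Finset.single_le_sum (f := fun j => |x j|)
        (fun j _ => abs_nonneg _) (Finset.mem_univ i)
      have h2 : |t| ≤ ε := by
        rw [abs_of_nonneg ht.1]; exact ht.2
      have h3 : |x i| * |t| ≤ (∑ j, |x j|) * ε :=
        mul_le_mul h1 h2 (abs_nonneg _) hsum
      have h4 : (∑ j, |x j|) * ε ≤ 1 / 2 := by
        have h5 : (∑ j, |x j|) * (1 + ∑ i, |x i|)⁻¹ ≤ 1 := by
          rw [mul_inv_le_iff₀ (by positivity)]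
          linarith
        rw [hε]
        nlinarith
      linarith
    have hmem : (show Rn n from WithLp.toLp 2 (fun i => x i * t)) ∈ Cube 0 1 := by
      intro i
      simpa using hxt i
    have := h _ hmem
    show Polynomial.eval t q = 0
    rw [key t]
    exact this
  have hq0 : q = 0 :=
    Polynomial.eq_zero_of_infinite_isRoot q ((Set.Icc_infinite hε0).mono hroots)
  have := key 1
  rw [hq0] at this
  simp at this
  simpa using this.symm
lemma totalDegree_shift (c : Rn n) (l : ℝ) (p : MvPolynomial (Fin n) ℝ) :
    (eval₂ C (fun i => C (c i) + C l * X i) p).totalDegree ≤ p.totalDegree := by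
  rw [eval₂_eq]
  refine (totalDegree_finset_sum _ _).trans (Finset.sup_le fun β hβ => ?_)
  have hg : ∀ i : Fin n, (C (c i) + C l * X i : MvPolynomial (Fin n) ℝ).totalDegree ≤ 1 := by
    intro i
    refine (totalDegree_add _ _).trans (max_le (by simp [totalDegree_C]) ?_)
    refine (totalDegree_mul _ _).trans ?_
    simp [totalDegree_C, totalDegree_X]
  calc (C (coeff β p) * ∏ i ∈ β.support, (C (c i) + C l * X i) ^ β i).totalDegree
      ≤ (C (coeff β p) : MvPolynomial (Fin n) ℝ).totalDegree +
        (∏ i ∈ β.support, (C (c i) + C l * X i) ^ β i).totalDegree := totalDegree_mul _ _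
    _ ≤ 0 + ∑ i ∈ β.support, ((C (c i) + C l * X i) ^ β i).totalDegree := by
        rw [totalDegree_C]
        exact add_le_add le_rfl (totalDegree_finset_prod _ _)
    _ ≤ ∑ i ∈ β.support, β i := by
        rw [zero_add]
        refine Finset.sum_le_sum fun i _ => ?_
        refine (totalDegree_pow _ _).trans ?_
        have := hg i
        calc β i * (C (c i) + C l * X i : MvPolynomial (Fin n) ℝ).totalDegree
            ≤ β i * 1 := Nat.mul_le_mul_left _ (hg i)
          _ = β i := Nat.mul_one _
    _ ≤ p.totalDegree := by
        have := le_totalDegree (p := p) hβ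
        simpa [Finsupp.sum] using this

set_option maxHeartbeats 1000000 in
set_option synthInstance.maxHeartbeats 400000 in
lemma unit_key (n d : ℕ) : ∃ γ : ℝ, 0 < γ ∧ γ ≤ 1 ∧
    ∀ p : MvPolynomial (Fin n) ℝ, p.totalDegree ≤ d →
      (∀ x ∈ Cube (0 : Rn n) 1, |eval (fun i => x i) p| ≤ 1) →
      (∃ x₀ ∈ Cube (0 : Rn n) 1, |eval (fun i => x₀ i) p| = 1) →
      ∃ c' : Rn n, Cube c' γ ⊆ Cube (0 : Rn n) 1 ∧
        ∀ x ∈ Cube c' γ, 1 / 2 ≤ |eval (fun i => x i) p| := by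
  classical
  set K : Set (Rn n) := Cube (0 : Rn n) 1 with hKdef
  have hK : IsCompact K := cube_isCompact 0 1
  haveI : CompactSpace K := isCompact_iff_compactSpace.mp hK
  set V : Submodule ℝ (MvPolynomial (Fin n) ℝ) := restrictTotalDegree (Fin n) ℝ d with hV
  set m := Module.finrank ℝ V with hm
  set b : Module.Basis (Fin m) ℝ V := Module.finBasis ℝ V with hb
  set Φ : (Fin m → ℝ) →ₗ[ℝ] MvPolynomial (Fin n) ℝ :=
    V.subtype.comp (b.equivFun.symm.toLinearMap) with hΦ
  have hΦinj : Function.Injective Φ := by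
    intro w w' h
    exact b.equivFun.symm.injective (Subtype.ext h)
  have contT : ∀ w : Fin m → ℝ, Continuous fun x : K => eval (fun i => (x : Rn n) i) (Φ w) :=
    fun w => (continuous_evalRn (Φ w)).comp continuous_subtype_val
  set T : (Fin m → ℝ) →ₗ[ℝ] C(K, ℝ) :=
    { toFun := fun w => ⟨fun x => eval (fun i => (x : Rn n) i) (Φ w), contT w⟩
      map_add' := fun w w' => by ext x; simp [map_add]
      map_smul' := fun r w => by ext x; simp [_root_.map_smul, MvPolynomial.smul_eval] } with hT
  have hTapp : ∀ w (x : K), T w x = eval (fun i => (x : Rn n) i) (Φ w) := fun w x => rfl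
  have hTinj : Function.Injective T := by
    intro w w' h
    have h0 : ∀ x : Rn n, x ∈ K → eval (fun i => x i) (Φ (w - w')) = 0 := by
      intro x hx
      have hx' := DFunLike.congr_fun h (⟨x, hx⟩ : K)
      rw [hTapp, hTapp] at hx'
      rw [map_sub, map_sub, hx', sub_self]
    have : Φ (w - w') = 0 := eq_zero_of_eval_zero_on_unit_cube _ h0
    have := hΦinj (this.trans (map_zero Φ).symm)
    exact sub_eq_zero.mp this
  have hTcont : Continuous T := T.continuous_of_finiteDimensional
  set e : (Fin m → ℝ) ≃ₗ[ℝ] LinearMap.range T := LinearEquiv.ofInjective T hTinj with he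
  set eC := e.toContinuousLinearEquiv with heC
  obtain ⟨C, hC0, hCb⟩ : ∃ C : ℝ, 0 ≤ C ∧ ∀ w, ‖w‖ ≤ C * ‖T w‖ := by
    obtain ⟨K', -, hK'⟩ := (T.injective_iff_antilipschitz).mp hTinj
    refine ⟨K', K'.coe_nonneg, fun w => ?_⟩
    have := hK'.le_mul_dist w 0
    simpa [dist_zero_right, map_zero] using this
  set S : Set (Fin m → ℝ) := {w | ‖T w‖ = 1} with hS
  have hScl : IsClosed S := isClosed_eq hTcont.norm continuous_const
  have hSbd : Bornology.IsBounded S := by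
    refine Metric.isBounded_closedBall (x := 0) (r := C) |>.subset fun w hw => ?_
    rw [Metric.mem_closedBall, dist_zero_right]
    have := hCb w
    rw [hw] at this
    simpa using this
  have hScomp : IsCompact S := Metric.isCompact_of_isClosed_isBounded hScl hSbd
  set G : (Fin m → ℝ) × Rn n → ℝ := fun q => eval (fun i => q.2 i) (Φ q.1) with hG
  have hGcont : Continuous G := by
    have hrw : ∀ q : (Fin m → ℝ) × Rn n,
        G q = ∑ j, q.1 j * eval (fun i => q.2 i) ((b j : MvPolynomial (Fin n) ℝ)) := by
      intro q
      have hΦsum : Φ q.1 = ∑ j, q.1 j • (b j : MvPolynomial (Fin n) ℝ) := by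
        rw [hΦ]
        show (V.subtype) (b.equivFun.symm q.1) = _
        rw [Module.Basis.equivFun_symm_apply, map_sum]
        simp
      rw [hG]
      dsimp only
      rw [hΦsum, map_sum]
      exact Finset.sum_congr rfl fun j _ => by rw [MvPolynomial.smul_eval]
    rw [show G = _ from funext hrw]
    exact continuous_finset_sum _ fun j _ =>
      ((continuous_apply j).comp continuous_fst).mul
        ((continuous_evalRn _).comp continuous_snd)
  have hUC : UniformContinuousOn G (S ×ˢ K) :=
    (hScomp.prod hK).uniformContinuousOn_of_continuous hGcont.continuousOn
  rw [Metric.uniformContinuousOn_iff] at hUC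
  obtain ⟨δ, hδ0, hδ⟩ := hUC (1 / 2) (by norm_num)
  set γ : ℝ := min 1 (δ / (2 * (n + 1))) with hγ
  have hγ0 : 0 < γ := lt_min one_pos (by positivity)
  have hγ1 : γ ≤ 1 := min_le_left _ _
  refine ⟨γ, hγ0, hγ1, ?_⟩
  rintro p hpd hple ⟨x₀, hx₀K, hx₀⟩
  have hpV : p ∈ V := (mem_restrictTotalDegree _ _ p).mpr hpd
  set w := b.equivFun ⟨p, hpV⟩ with hw
  have hΦw : Φ w = p := by
    rw [hΦ, hw]
    show (V.subtype) (b.equivFun.symm (b.equivFun ⟨p, hpV⟩)) = p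
    rw [b.equivFun.symm_apply_apply]
    rfl
  have hwS : w ∈ S := by
    have hle : ‖T w‖ ≤ 1 := by
      refine (ContinuousMap.norm_le _ zero_le_one).2 fun x => ?_
      rw [Real.norm_eq_abs, hTapp, hΦw]
      exact hple x x.2
    have hge : (1 : ℝ) ≤ ‖T w‖ := by
      have h1 := (T w).norm_coe_le_norm (⟨x₀, hx₀K⟩ : K)
      rw [Real.norm_eq_abs, hTapp, hΦw] at h1
      rw [hx₀] at h1
      exact h1
    exact le_antisymm hle hge
  have hx₀b : ∀ i, |x₀ i| ≤ 1 / 2 := fun i => by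
    have := hx₀K i
    simpa using this
  set c' : Rn n := (1 - γ) • x₀ with hc'
  have hc'i : ∀ i, c' i = (1 - γ) * x₀ i := fun i => rfl
  have hsub : Cube c' γ ⊆ K := by
    intro x hx i
    have h1 := hx i
    rw [hc'i] at h1
    have h2 : |x i - 0| ≤ 1 / 2 := by
      have h3 : |x i| ≤ |x i - (1 - γ) * x₀ i| + |(1 - γ) * x₀ i| := by
        calc |x i| = |(x i - (1 - γ) * x₀ i) + (1 - γ) * x₀ i| := by ring_nf
          _ ≤ _ := abs_add_le _ _
      have h4 : |(1 - γ) * x₀ i| ≤ (1 - γ) * (1 / 2) := by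
        rw [abs_mul, abs_of_nonneg (by linarith : (0:ℝ) ≤ 1 - γ)]
        exact mul_le_mul_of_nonneg_left (hx₀b i) (by linarith)
      rw [sub_zero]
      linarith
    simpa using h2
  refine ⟨c', hsub, ?_⟩
  intro x hx
  have hxK : x ∈ K := hsub hx
  have hcoord : ∀ i, |x i - x₀ i| ≤ γ := by
    intro i
    have h1 := hx i
    rw [hc'i] at h1
    have h2 : |(1 - γ) * x₀ i - x₀ i| = γ * |x₀ i| := by
      rw [show (1 - γ) * x₀ i - x₀ i = -(γ * x₀ i) by ring, abs_neg, abs_mul,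
        abs_of_nonneg hγ0.le]
    calc |x i - x₀ i| ≤ |x i - (1 - γ) * x₀ i| + |(1 - γ) * x₀ i - x₀ i| := abs_sub_le _ _ _
      _ ≤ γ / 2 + γ * |x₀ i| := by rw [h2]; exact add_le_add h1 le_rfl
      _ ≤ γ / 2 + γ * (1 / 2) := by
          exact add_le_add le_rfl (mul_le_mul_of_nonneg_left (hx₀b i) hγ0.le)
      _ = γ := by ring
  have hdist : dist x x₀ < δ := by
    have h1 : dist x x₀ ≤ (n + 1) * γ := dist_le_of_forall hγ0.le hcoord
    have h2 : (n + 1 : ℝ) * γ < δ := by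
      have h3 : γ ≤ δ / (2 * (n + 1)) := min_le_right _ _
      have h4 : (0:ℝ) < n + 1 := by positivity
      calc (n + 1 : ℝ) * γ ≤ (n + 1) * (δ / (2 * (n + 1))) :=
            mul_le_mul_of_nonneg_left h3 h4.le
        _ = δ / 2 := by field_simp
        _ < δ := by linarith
    linarith
  have hpair : dist ((w, x) : (Fin m → ℝ) × Rn n) (w, x₀) < δ := by
    rw [Prod.dist_eq]
    simp only [dist_self]
    rw [max_lt_iff]
    exact ⟨hδ0, hdist⟩
  have h2 := hδ (w, x) ⟨hwS, hxK⟩ (w, x₀) ⟨hwS, hx₀K⟩ hpair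
  have hGx : G (w, x) = eval (fun i => x i) p := by rw [hG]; dsimp only; rw [hΦw]
  have hGx₀ : G (w, x₀) = eval (fun i => x₀ i) p := by rw [hG]; dsimp only; rw [hΦw]
  rw [Real.dist_eq, hGx, hGx₀] at h2
  have h3 : |eval (fun i => x₀ i) p| - |eval (fun i => x i) p| ≤
      |eval (fun i => x i) p - eval (fun i => x₀ i) p| := by
    rw [abs_sub_comm]
    exact abs_sub_abs_le_abs_sub _ _
  rw [hx₀] at h3
  linarith [abs_nonneg (eval (fun i => x i) p - eval (fun i => x₀ i) p), h2, h3]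
end Statement12Aux

open MvPolynomial in
theorem statement12
    (n : ℕ) (D : ℝ) (hD : 0 < D) (κ : ℕ) :
    ∃ Cκ : ℝ, 0 < Cκ ∧
      ∀ μ : Measure (Rn n), IsLocallyFiniteMeasure μ → DoublingWith μ D →
      ∀ (c : Rn n) (l : ℝ), 0 < l →
      ∀ p : MvPolynomial (Fin n) ℝ, p.totalDegree < κ →
        sSup ((fun x : Rn n => |MvPolynomial.eval (fun i => x i) p|) '' Cube c l) = 1 →
        μ (Cube c l) ≤ ENNReal.ofReal Cκ *
          ∫⁻ x in Cube c l, ENNReal.ofReal (MvPolynomial.eval (fun i => x i) p ^ 2) ∂μ := by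
  obtain _ | κ' := κ
  · exact ⟨1, one_pos, fun μ _ _ c l _ p hdeg _ => absurd hdeg (Nat.not_lt_zero _)⟩
  obtain ⟨γ, hγ0, hγ1, hkey⟩ := Statement12Aux.unit_key n κ'
  obtain ⟨k, hk⟩ : ∃ k : ℕ, 2 / γ < 2 ^ k := pow_unbounded_of_one_lt ((2:ℝ) / γ) one_lt_two
  refine ⟨4 * D ^ k, by positivity, ?_⟩
  intro μ _ hdoub c l hl p hdeg hsup
  have hfc : Continuous fun x : Rn n => |MvPolynomial.eval (fun i => x i) p| :=
    (Statement12Aux.continuous_evalRn p).abs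
  have hQc : IsCompact (Cube c l) := Statement12Aux.cube_isCompact c l
  have hQne : (Cube c l).Nonempty := ⟨c, Statement12Aux.cube_self_mem hl.le⟩
  have himg : IsCompact ((fun x : Rn n => |MvPolynomial.eval (fun i => x i) p|) '' Cube c l) :=
    hQc.image hfc
  have himgne : ((fun x : Rn n => |MvPolynomial.eval (fun i => x i) p|) '' Cube c l).Nonempty :=
    hQne.image _
  have hmax : (1:ℝ) ∈ (fun x : Rn n => |MvPolynomial.eval (fun i => x i) p|) '' Cube c l := by
    rw [← hsup]; exact himg.sSup_mem himgne
  obtain ⟨y₀, hy₀Q, hy₀⟩ := hmax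
  have hle : ∀ y ∈ Cube c l, |MvPolynomial.eval (fun i => y i) p| ≤ 1 := fun y hy => by
    rw [← hsup]
    exact le_csSup himg.bddAbove (Set.mem_image_of_mem _ hy)
  set q : MvPolynomial (Fin n) ℝ := eval₂ C (fun i => C (c i) + C l * X i) p with hqdef
  have hqdeg : q.totalDegree ≤ κ' :=
    (Statement12Aux.totalDegree_shift c l p).trans (Nat.lt_succ_iff.mp hdeg)
  have hco : ∀ (a x : Rn n) (t : ℝ) (i : Fin n), (a + t • x) i = a i + t * x i := fun a x t i => rfl
  have hevalq : ∀ x : Rn n,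
      MvPolynomial.eval (fun i => x i) q = MvPolynomial.eval (fun i => (c + l • x) i) p := by
    intro x
    rw [hqdef, Statement12Aux.eval_shift]
    congr 1
  have hmemQ : ∀ x : Rn n, x ∈ Cube 0 1 → (c + l • x) ∈ Cube c l := by
    intro x hx i
    rw [hco]
    have h1 : |x i| ≤ 1 / 2 := by simpa using hx i
    have : |c i + l * x i - c i| = l * |x i| := by
      rw [show c i + l * x i - c i = l * x i by ring, abs_mul, abs_of_nonneg hl.le]
    rw [this]
    calc l * |x i| ≤ l * (1/2) := mul_le_mul_of_nonneg_left h1 hl.le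
      _ = l / 2 := by ring
  have hqle : ∀ x ∈ Cube (0 : Rn n) 1, |MvPolynomial.eval (fun i => x i) q| ≤ 1 := by
    intro x hx
    rw [hevalq]
    exact hle _ (hmemQ x hx)
  set x₀ : Rn n := l⁻¹ • (y₀ - c) with hx₀def
  have hx₀mem : x₀ ∈ Cube (0 : Rn n) 1 := by
    intro i
    have h1 : x₀ i = l⁻¹ * (y₀ i - c i) := rfl
    have h2 := hy₀Q i
    have h5 : |x₀ i - (0 : Rn n) i| = |y₀ i - c i| / l := by
      rw [show (0 : Rn n) i = 0 from rfl, h1, sub_zero, abs_mul,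
        abs_of_nonneg (inv_nonneg.mpr hl.le)]
      field_simp
    rw [h5, div_le_div_iff₀ hl (by norm_num : (0:ℝ) < 2)]
    linarith [h2]
  have hx₀val : |MvPolynomial.eval (fun i => x₀ i) q| = 1 := by
    rw [hevalq]
    have : (fun i => (c + l • x₀) i) = fun i => y₀ i := by
      funext i
      rw [hco, show x₀ i = l⁻¹ * (y₀ i - c i) from rfl]
      field_simp
      ring
    rw [this]
    simpa using hy₀
  obtain ⟨c', hc'sub, hc'low⟩ := hkey q hqdeg hqle ⟨x₀, hx₀mem, hx₀val⟩
  have hc'bd : ∀ i, |c' i| ≤ 1 / 2 := by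
    intro i
    have := hc'sub (Statement12Aux.cube_self_mem (l := γ) hγ0.le) i
    simpa using this
  set c'' : Rn n := c + l • c' with hc''def
  have hs0 : 0 < l * γ := by positivity
  have hxmap : ∀ y : Rn n, y ∈ Cube c'' (l * γ) → l⁻¹ • (y - c) ∈ Cube c' γ := by
    intro y hy i
    have h1 : (l⁻¹ • (y - c)) i = l⁻¹ * (y i - c i) := rfl
    have h2 := hy i
    have h3 : c'' i = c i + l * c' i := rfl
    rw [h3] at h2
    rw [h1]
    have h4 : |l⁻¹ * (y i - c i) - c' i| = |y i - (c i + l * c' i)| / l := by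
      rw [show l⁻¹ * (y i - c i) - c' i = l⁻¹ * (y i - (c i + l * c' i)) by field_simp; ring,
        abs_mul, abs_of_nonneg (inv_nonneg.mpr hl.le)]
      field_simp
    rw [h4, div_le_div_iff₀ hl (by norm_num : (0:ℝ) < 2)]
    calc |y i - (c i + l * c' i)| * 2 ≤ (l * γ / 2) * 2 := by linarith [h2]
      _ = γ * l := by ring
  have hylow : ∀ y ∈ Cube c'' (l * γ), 1 / 2 ≤ |MvPolynomial.eval (fun i => y i) p| := by
    intro y hy
    have hx := hxmap y hy
    have h5 := hc'low _ hx
    rw [hevalq] at h5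
    have : (fun i => (c + l • (l⁻¹ • (y - c))) i) = fun i => y i := by
      funext i
      rw [hco, show (l⁻¹ • (y - c)) i = l⁻¹ * (y i - c i) from rfl]
      field_simp
      ring
    rw [this] at h5
    exact h5
  have hQ''sub : Cube c'' (l * γ) ⊆ Cube c l := by
    intro y hy i
    have hx : l⁻¹ • (y - c) ∈ Cube (0 : Rn n) 1 := hc'sub (hxmap y hy)
    have h1 : |(l⁻¹ • (y - c)) i - 0| ≤ 1 / 2 := hx i
    rw [sub_zero, show (l⁻¹ • (y - c)) i = l⁻¹ * (y i - c i) from rfl, abs_mul,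
      abs_of_nonneg (inv_nonneg.mpr hl.le)] at h1
    have h2 : |y i - c i| = l * (l⁻¹ * |y i - c i|) := by field_simp
    rw [h2]
    calc l * (l⁻¹ * |y i - c i|) ≤ l * (1/2) := mul_le_mul_of_nonneg_left h1 hl.le
      _ = l / 2 := by ring
  have hiter : ∀ j : ℕ, μ (Cube c'' ((2:ℝ)^j * (l * γ))) ≤
      (ENNReal.ofReal D)^j * μ (Cube c'' (l * γ)) := by
    intro j
    induction j with
    | zero => simp
    | succ j ih =>
        have heq : (2:ℝ)^(j+1) * (l*γ) = 2 * ((2:ℝ)^j * (l*γ)) := by ring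
        rw [heq]
        calc μ (Cube c'' (2 * ((2:ℝ)^j * (l*γ))))
            ≤ ENNReal.ofReal D * μ (Cube c'' ((2:ℝ)^j * (l*γ))) := hdoub c'' _ (by positivity)
          _ ≤ ENNReal.ofReal D * ((ENNReal.ofReal D)^j * μ (Cube c'' (l*γ))) :=
              mul_le_mul_right ih _
          _ = (ENNReal.ofReal D)^(j+1) * μ (Cube c'' (l*γ)) := by ring
  have hQsubBig : Cube c l ⊆ Cube c'' ((2:ℝ)^k * (l * γ)) := by
    intro y hy i
    have h1 := hy i
    have h2 : c'' i = c i + l * c' i := rfl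
    have h3 : |y i - c'' i| ≤ |y i - c i| + l * |c' i| := by
      rw [h2]
      calc |y i - (c i + l * c' i)| = |(y i - c i) + (-(l * c' i))| := by ring_nf
        _ ≤ |y i - c i| + |(-(l * c' i))| := abs_add_le _ _
        _ = |y i - c i| + l * |c' i| := by rw [abs_neg, abs_mul, abs_of_nonneg hl.le]
    have h4 : |y i - c'' i| ≤ l := by
      have := hc'bd i
      calc |y i - c'' i| ≤ |y i - c i| + l * |c' i| := h3
        _ ≤ l / 2 + l * (1/2) := add_le_add h1 (mul_le_mul_of_nonneg_left (hc'bd i) hl.le)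
        _ = l := by ring
    have h5 : (2:ℝ) < 2^k * γ := by
      rw [div_lt_iff₀ hγ0] at hk
      linarith [hk]
    have h6 : l ≤ (2:ℝ)^k * (l * γ) / 2 := by nlinarith [hl.le]
    exact h4.trans h6
  have hmeas : Measurable fun x : Rn n => ENNReal.ofReal (MvPolynomial.eval (fun i => x i) p ^ 2) :=
    (((Statement12Aux.continuous_evalRn p).pow 2).measurable).ennreal_ofReal
  have hlow2 : ENNReal.ofReal (1/4) * μ (Cube c'' (l * γ)) ≤
      ∫⁻ x in Cube c l, ENNReal.ofReal (MvPolynomial.eval (fun i => x i) p ^ 2) ∂μ := by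
    calc ENNReal.ofReal (1/4) * μ (Cube c'' (l * γ))
        = ∫⁻ _ in Cube c'' (l * γ), ENNReal.ofReal (1/4) ∂μ := (setLIntegral_const _ _).symm
      _ ≤ ∫⁻ x in Cube c'' (l * γ), ENNReal.ofReal (MvPolynomial.eval (fun i => x i) p ^ 2) ∂μ := by
          refine setLIntegral_mono hmeas fun x hx => ?_
          apply ENNReal.ofReal_le_ofReal
          have h7 := hylow x hx
          nlinarith [sq_abs (MvPolynomial.eval (fun i => x i) p),
            abs_nonneg (MvPolynomial.eval (fun i => x i) p)]
      _ ≤ _ := lintegral_mono' (Measure.restrict_mono hQ''sub le_rfl) le_rfl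
  have h1 : μ (Cube c l) ≤ (ENNReal.ofReal D)^k * μ (Cube c'' (l * γ)) :=
    (measure_mono hQsubBig).trans (hiter k)
  have h2 : μ (Cube c'' (l * γ)) ≤ ENNReal.ofReal 4 *
      ∫⁻ x in Cube c l, ENNReal.ofReal (MvPolynomial.eval (fun i => x i) p ^ 2) ∂μ := by
    have h3 := mul_le_mul_right hlow2 (ENNReal.ofReal 4)
    calc μ (Cube c'' (l * γ))
        = (ENNReal.ofReal 4 * ENNReal.ofReal (1/4)) * μ (Cube c'' (l * γ)) := by
          rw [← ENNReal.ofReal_mul (by norm_num : (0:ℝ) ≤ 4)]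
          norm_num
      _ = ENNReal.ofReal 4 * (ENNReal.ofReal (1/4) * μ (Cube c'' (l * γ))) := by rw [mul_assoc]
      _ ≤ _ := h3
  calc μ (Cube c l)
      ≤ (ENNReal.ofReal D)^k * (ENNReal.ofReal 4 *
        ∫⁻ x in Cube c l, ENNReal.ofReal (MvPolynomial.eval (fun i => x i) p ^ 2) ∂μ) :=
        h1.trans (mul_le_mul_right h2 _)
    _ = ENNReal.ofReal (4 * D ^ k) *
        ∫⁻ x in Cube c l, ENNReal.ofReal (MvPolynomial.eval (fun i => x i) p ^ 2) ∂μ := by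
        rw [ENNReal.ofReal_mul (by norm_num : (0:ℝ) ≤ 4), ← ENNReal.ofReal_pow hD.le]
        ring
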